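/- arXiv:1611.10285 — 2 statements merged into one kernel-verified Lean document; each statement's English description precedes it below -/
import Mathlib

section
/- Let $k$ be a field, $L$ a finite group, and $\alpha: L \times L \to k^\times$ a normalized 2-cocycle. View $k^\alpha L$ as a module over its enveloping algebra $(k^\alpha L)^e = k^\alpha L \otimes (k^\alpha L)^{op}$ via $(a \otimes b) \cdot c = a c b$. Then $k^\alpha L \cong (k^\alpha L)^e \otimes_{\delta(kL)} k$ as $(k^\alpha L)^e$-modules, where $kL$ embeds in $(k^\alpha L)^e$ via $\delta(l) = \overline{l} \otimes (\overline{l})^{-1}$ and $k$ is the trivial $kL$-module; i.e., $k^\alpha L$ is induced from the trivial module of $kL$. -/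
open TensorProduct

/-- A normalized 2-cocycle on a group `L` with values in `kˣ`. -/
def IsNormalized2Cocycle {k L : Type*} [Field k] [Group L] (σ : L → L → kˣ) : Prop :=
  (∀ l m n : L, σ l m * σ (l * m) n = σ m n * σ l (m * n)) ∧
    (∀ l : L, σ 1 l = 1) ∧ (∀ l : L, σ l 1 = 1)

/-- as a module over its enveloping algebra
`(k^α L)ᵉ = k^α L ⊗ (k^α L)ᵒᵖ` (acting by `(a ⊗ b) · c = a c b`), the twisted
group algebra `k^α L` is induced from the trivial module `k` of `kL`, embedded
via `δ(l) = bar l ⊗ (bar l)⁻¹`.  Equivalently (since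
`(k^α L)ᵉ ⊗_{δ(kL)} k ≅ (k^α L)ᵉ / I` where `I` is the `(k^α L)ᵉ`-submodule
generated by the elements `δ(l) - 1`), the `(k^α L)ᵉ`-equivariant map
`(k^α L)ᵉ → k^α L`, `x ⊗ y ↦ x y`, is surjective with kernel exactly `I`.
Here `k^α L` is modelled as a `k`-algebra `A` with basis of units `{bar l}`
satisfying `bar 1 = 1` and `bar l * bar m = α(l,m) • bar (lm)`. -/
theorem stmt_8 (k L : Type*) [Field k] [Group L] [Finite L]
    (α : L → L → kˣ) (hα : IsNormalized2Cocycle α)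
    (A : Type*) [Ring A] [Algebra k A]
    (bar : L → Aˣ) (b : Module.Basis L k A) (hb : ∀ l : L, b l = (bar l : A))
    (hone : bar 1 = 1)
    (hmul : ∀ l m : L, (bar l : A) * (bar m : A) = (α l m : k) • (bar (l * m) : A)) :
    ∃ f : (A ⊗[k] Aᵐᵒᵖ) →ₗ[k] A,
      (∀ x y : A, f (x ⊗ₜ[k] MulOpposite.op y) = x * y) ∧
      (∀ (x y : A) (z : A ⊗[k] Aᵐᵒᵖ),
        f ((x ⊗ₜ[k] MulOpposite.op y) * z) = x * f z * y) ∧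
      Function.Surjective f ∧
      (LinearMap.ker f : Set (A ⊗[k] Aᵐᵒᵖ)) =
        (Submodule.span (A ⊗[k] Aᵐᵒᵖ)
          { z : A ⊗[k] Aᵐᵒᵖ | ∃ l : L,
            z = (bar l : A) ⊗ₜ[k] MulOpposite.op (((bar l)⁻¹ : Aˣ) : A) - 1 } :
          Set (A ⊗[k] Aᵐᵒᵖ)) := by
  classical
  set f : (A ⊗[k] Aᵐᵒᵖ) →ₗ[k] A :=
    (LinearMap.mul' k A).comp
      (TensorProduct.map LinearMap.id (MulOpposite.opLinearEquiv k).symm.toLinearMap) with hf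
  have hpure : ∀ x y : A, f (x ⊗ₜ[k] MulOpposite.op y) = x * y := by
    intro x y; simp [hf]
  have hpure' : ∀ (x : A) (c : Aᵐᵒᵖ), f (x ⊗ₜ[k] c) = x * c.unop := by
    intro x c; simpa using hpure x c.unop
  have hequiv : ∀ (x y : A) (z : A ⊗[k] Aᵐᵒᵖ),
      f ((x ⊗ₜ[k] MulOpposite.op y) * z) = x * f z * y := by
    intro x y z
    induction z using TensorProduct.induction_on with
    | zero => simp
    | tmul a c =>
        rw [Algebra.TensorProduct.tmul_mul_tmul, hpure' (x * a), hpure' a]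
        simp [mul_assoc]
    | add z w hz hw =>
        rw [mul_add, map_add, map_add, hz, hw, mul_add, add_mul]
  set S : Set (A ⊗[k] Aᵐᵒᵖ) :=
    { z : A ⊗[k] Aᵐᵒᵖ | ∃ l : L,
      z = (bar l : A) ⊗ₜ[k] MulOpposite.op (((bar l)⁻¹ : Aˣ) : A) - 1 } with hS
  set J : Submodule (A ⊗[k] Aᵐᵒᵖ) (A ⊗[k] Aᵐᵒᵖ) := Submodule.span (A ⊗[k] Aᵐᵒᵖ) S with hJ
  refine ⟨f, hpure, hequiv, fun a => ⟨a ⊗ₜ[k] MulOpposite.op 1, by rw [hpure]; rw [mul_one]⟩, ?_⟩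
  -- kernel is multiplicatively stable
  have hmulstab : ∀ (r z : A ⊗[k] Aᵐᵒᵖ), f z = 0 → f (r * z) = 0 := by
    intro r z hz
    induction r using TensorProduct.induction_on with
    | zero => simp
    | tmul x c =>
        have := hequiv x c.unop z
        rw [MulOpposite.op_unop] at this
        rw [this, hz, mul_zero, zero_mul]
    | add r s hr hs => rw [add_mul, map_add, hr, hs, add_zero]
  -- key: x ⊗ op y - (x*y) ⊗ op 1 ∈ J
  have hkey : ∀ (x y : A),
      x ⊗ₜ[k] MulOpposite.op y - (x * y) ⊗ₜ[k] MulOpposite.op (1 : A) ∈ J := by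
    intro x y
    set φ : A →ₗ[k] A ⊗[k] Aᵐᵒᵖ :=
      (TensorProduct.mk k A Aᵐᵒᵖ x).comp (MulOpposite.opLinearEquiv k).toLinearMap
        - ((TensorProduct.mk k A Aᵐᵒᵖ).flip (MulOpposite.op (1 : A))).comp
            (LinearMap.mulLeft k x) with hφ
    have hφ_apply : ∀ y : A,
        φ y = x ⊗ₜ[k] MulOpposite.op y - (x * y) ⊗ₜ[k] MulOpposite.op (1 : A) := by
      intro y
      simp only [hφ, LinearMap.sub_apply, LinearMap.coe_comp, Function.comp_apply,
        TensorProduct.mk_apply, LinearMap.flip_apply, LinearMap.mulLeft_apply,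
        LinearEquiv.coe_coe, MulOpposite.coe_opLinearEquiv]
    have htop : y ∈ Submodule.span k (Set.range fun l : L => (bar l : A)) := by
      have hr : (fun l : L => (bar l : A)) = ⇑b := funext fun l => (hb l).symm
      rw [hr, b.span_eq]; trivial
    have hle : Submodule.span k (Set.range fun l : L => (bar l : A)) ≤
        (J.restrictScalars k).comap φ := by
      rw [Submodule.span_le]
      rintro _ ⟨m, rfl⟩
      have hs : (bar m : A) ⊗ₜ[k] MulOpposite.op (((bar m)⁻¹ : Aˣ) : A) - 1 ∈ J :=
        Submodule.subset_span ⟨m, rfl⟩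
      have hsm : (x ⊗ₜ[k] MulOpposite.op (bar m : A)) •
          ((bar m : A) ⊗ₜ[k] MulOpposite.op (((bar m)⁻¹ : Aˣ) : A) - 1) ∈ J :=
        Submodule.smul_mem J _ hs
      have hcalc : φ (bar m : A) =
          -((x ⊗ₜ[k] MulOpposite.op (bar m : A)) •
            ((bar m : A) ⊗ₜ[k] MulOpposite.op (((bar m)⁻¹ : Aˣ) : A) - 1)) := by
        rw [hφ_apply, smul_eq_mul, mul_sub, mul_one,
          Algebra.TensorProduct.tmul_mul_tmul, ← MulOpposite.op_mul,
          Units.inv_mul, neg_sub]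
      simp only [SetLike.mem_coe, Submodule.mem_comap, Submodule.restrictScalars_mem, hcalc]
      exact J.neg_mem hsm
    exact (by simpa [hφ_apply] using (hle htop) : _)
  have hkey2 : ∀ z : A ⊗[k] Aᵐᵒᵖ, z - (f z) ⊗ₜ[k] MulOpposite.op (1 : A) ∈ J := by
    intro z
    induction z using TensorProduct.induction_on with
    | zero => simpa using J.zero_mem
    | tmul a c =>
        have := hkey a c.unop
        rwa [MulOpposite.op_unop, ← hpure' a c] at this
    | add z w hz hw =>
        have := J.add_mem hz hw
        rw [map_add] at *
        convert this using 1
        rw [TensorProduct.add_tmul]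
        abel
  ext z
  simp only [SetLike.mem_coe, LinearMap.mem_ker]
  constructor
  · intro hz
    have := hkey2 z
    rwa [hz, TensorProduct.zero_tmul, sub_zero] at this
  · intro hz
    induction hz using Submodule.span_induction with
    | mem w hw =>
        obtain ⟨l, rfl⟩ := hw
        rw [map_sub, hpure]
        have h1 : f (1 : A ⊗[k] Aᵐᵒᵖ) = 1 := by
          rw [Algebra.TensorProduct.one_def, hpure']; simp
        rw [h1, Units.mul_inv, sub_self]
    | zero => simp
    | add w v _ _ hw hv => rw [map_add, hw, hv, add_zero]
    | smul r w _ hw => rw [smul_eq_mul]; exact hmulstab r w hw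
end

section
/- Let $A$ be a finite dimensional Hopf algebra over a field $k$ and $M$ a finite dimensional $A$-module. If $M \otimes M$ is projective and $M \otimes M^* \cong M^* \otimes M$ as $A$-modules, then $M$ is projective. -/
set_option maxHeartbeats 1000000
set_option synthInstance.maxHeartbeats 200000
set_option linter.unusedSectionVars false


open TensorProduct

/-- Given a bialgebra `A` over `k` and `A`-module structures on `M` and `N`
(encoded as `k`-algebra maps `A → End_k M`, `A → End_k N`), the `A`-module
structure on `M ⊗[k] N` obtained by letting `a` act via the comultiplication,
`a • (m ⊗ n) = Σ a₁ m ⊗ a₂ n`. -/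
noncomputable def tensorAction {k A M N : Type*} [CommSemiring k]
    [Semiring A] [Bialgebra k A]
    [AddCommMonoid M] [Module k M] [AddCommMonoid N] [Module k N]
    (ρM : A →ₐ[k] Module.End k M) (ρN : A →ₐ[k] Module.End k N) :
    A →ₐ[k] Module.End k (M ⊗[k] N) :=
  (Module.endTensorEndAlgHom (R := k) (S := k) (A := k) (M := M) (N := N)).comp
    ((Algebra.TensorProduct.map ρM ρN).comp (Bialgebra.comulAlgHom k A))

section Aux
variable {k A : Type*} [CommSemiring k] [Semiring A] [Bialgebra k A]
variable {M N : Type*} [AddCommMonoid M] [Module k M] [AddCommMonoid N] [Module k N]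

/-- The two-variable action map: `u = Σ b ⊗ b'` acts on `M ⊗ N` by `ρ₁ b ⊗ ρ₂ b'`. -/
noncomputable def F2 (ρ₁ : A →ₐ[k] Module.End k M) (ρ₂ : A →ₐ[k] Module.End k N) :
    A ⊗[k] A →ₗ[k] Module.End k (M ⊗[k] N) :=
  (TensorProduct.homTensorHomMap (RingHom.id k) M N M N) ∘ₗ
    (TensorProduct.map ρ₁.toLinearMap ρ₂.toLinearMap)

variable (ρ₁ : A →ₐ[k] Module.End k M) (ρ₂ : A →ₐ[k] Module.End k N)

@[simp] lemma F2_tmul (b b' : A) (x : M) (y : N) :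
    F2 ρ₁ ρ₂ (b ⊗ₜ[k] b') (x ⊗ₜ[k] y) = ρ₁ b x ⊗ₜ[k] ρ₂ b' y := by
  simp [F2]

lemma F2_tmul' (b b' : A) :
    F2 ρ₁ ρ₂ (b ⊗ₜ[k] b') = TensorProduct.map (ρ₁ b) (ρ₂ b') := by
  simp [F2, TensorProduct.homTensorHomMap_apply]

lemma tensorAction_apply (a : A) (z : M ⊗[k] N) :
    tensorAction ρ₁ ρ₂ a z = F2 ρ₁ ρ₂ (Coalgebra.comul a) z := by
  have h : ∀ u : A ⊗[k] A,
      (Module.endTensorEndAlgHom (R := k) (S := k) (A := k) (M := M) (N := N))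
        (Algebra.TensorProduct.map ρ₁ ρ₂ u) = F2 ρ₁ ρ₂ u := by
    intro u
    induction u using TensorProduct.induction_on with
    | zero => simp
    | tmul b b' =>
        simp only [F2_tmul', Module.endTensorEndAlgHom_apply,
          Algebra.TensorProduct.map_tmul]
        ext x y
        simp
    | add u v hu hv => simp [map_add, hu, hv]
  show (Module.endTensorEndAlgHom (R := k) (S := k) (A := k))
      ((Algebra.TensorProduct.map ρ₁ ρ₂) ((Bialgebra.comulAlgHom k A) a)) z = _
  rw [h, Bialgebra.comulAlgHom_apply]

lemma tensorAction_eq (a : A) :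
    (tensorAction ρ₁ ρ₂ a : Module.End k (M ⊗[k] N)) = F2 ρ₁ ρ₂ (Coalgebra.comul a) :=
  LinearMap.ext fun z => tensorAction_apply ρ₁ ρ₂ a z

lemma F2_invariant_left (c : M) (hc : ∀ b : A, ρ₁ b c = Coalgebra.counit (R := k) b • c)
    (u : A ⊗[k] A) (m : N) :
    F2 ρ₁ ρ₂ u (c ⊗ₜ[k] m) =
      c ⊗ₜ[k] ρ₂ ((TensorProduct.lid k A)
        ((Coalgebra.counit (R := k) (A := A)).rTensor A u)) m := by
  induction u using TensorProduct.induction_on with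
  | zero => simp
  | tmul b b' =>
      rw [F2_tmul, hc b]
      simp only [LinearMap.rTensor_tmul, TensorProduct.lid_tmul, map_smul,
        LinearMap.smul_apply]
      rw [TensorProduct.smul_tmul]
  | add u v hu hv => simp only [map_add, LinearMap.add_apply, hu, hv, ← TensorProduct.tmul_add]

lemma tensorAction_invariant_left (c : M)
    (hc : ∀ b : A, ρ₁ b c = Coalgebra.counit (R := k) b • c) (a : A) (m : N) :
    tensorAction ρ₁ ρ₂ a (c ⊗ₜ[k] m) = c ⊗ₜ[k] ρ₂ a m := by
  rw [tensorAction_apply, F2_invariant_left ρ₁ ρ₂ c hc, Coalgebra.rTensor_counit_comul]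
  simp

lemma F2_invariant_right (ct : N →ₗ[k] k)
    (hct : ∀ (b : A) (n : N), ct (ρ₂ b n) = Coalgebra.counit (R := k) b • ct n)
    (u : A ⊗[k] A) (z : M ⊗[k] N) :
    ((TensorProduct.rid k M).toLinearMap ∘ₗ ct.lTensor M) (F2 ρ₁ ρ₂ u z) =
      ρ₁ ((TensorProduct.rid k A) ((Coalgebra.counit (R := k) (A := A)).lTensor A u))
        (((TensorProduct.rid k M).toLinearMap ∘ₗ ct.lTensor M) z) := by
  induction u using TensorProduct.induction_on with
  | zero => simp
  | tmul b b' =>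
      induction z using TensorProduct.induction_on with
      | zero => simp
      | tmul x y => simp [hct, mul_comm, smul_smul, TensorProduct.smul_tmul']
      | add z w hz hw => simp only [map_add, hz, hw]
  | add u v hu hv => simp [map_add, hu, hv]

lemma tensorAction_invariant_right (ct : N →ₗ[k] k)
    (hct : ∀ (b : A) (n : N), ct (ρ₂ b n) = Coalgebra.counit (R := k) b • ct n)
    (a : A) (z : M ⊗[k] N) :
    ((TensorProduct.rid k M).toLinearMap ∘ₗ ct.lTensor M) (tensorAction ρ₁ ρ₂ a z) =
      ρ₁ a (((TensorProduct.rid k M).toLinearMap ∘ₗ ct.lTensor M) z) := by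
  rw [tensorAction_apply, F2_invariant_right ρ₁ ρ₂ ct hct, Coalgebra.lTensor_counit_comul]
  simp

lemma F2_map_compat {M' N' : Type*} [AddCommMonoid M'] [Module k M']
    [AddCommMonoid N'] [Module k N']
    (ρ₁' : A →ₐ[k] Module.End k M') (ρ₂' : A →ₐ[k] Module.End k N')
    (f : M →ₗ[k] M') (g : N →ₗ[k] N')
    (hf : ∀ (b : A) (x : M), f (ρ₁ b x) = ρ₁' b (f x))
    (hg : ∀ (b : A) (y : N), g (ρ₂ b y) = ρ₂' b (g y))
    (u : A ⊗[k] A) (z : M ⊗[k] N) :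
    TensorProduct.map f g (F2 ρ₁ ρ₂ u z) = F2 ρ₁' ρ₂' u (TensorProduct.map f g z) := by
  induction u using TensorProduct.induction_on with
  | zero => simp
  | tmul b b' =>
      induction z using TensorProduct.induction_on with
      | zero => simp
      | tmul x y => simp [hf, hg]
      | add z w hz hw => simp only [map_add, hz, hw]
  | add u v hu hv => simp [map_add, hu, hv]

lemma tensorAction_map_compat {M' N' : Type*} [AddCommMonoid M'] [Module k M']
    [AddCommMonoid N'] [Module k N']
    (ρ₁' : A →ₐ[k] Module.End k M') (ρ₂' : A →ₐ[k] Module.End k N')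
    (f : M →ₗ[k] M') (g : N →ₗ[k] N')
    (hf : ∀ (b : A) (x : M), f (ρ₁ b x) = ρ₁' b (f x))
    (hg : ∀ (b : A) (y : N), g (ρ₂ b y) = ρ₂' b (g y))
    (a : A) (z : M ⊗[k] N) :
    TensorProduct.map f g (tensorAction ρ₁ ρ₂ a z) =
      tensorAction ρ₁' ρ₂' a (TensorProduct.map f g z) := by
  rw [tensorAction_apply, tensorAction_apply, F2_map_compat ρ₁ ρ₂ ρ₁' ρ₂' f g hf hg]

section Assoc
variable {P : Type*} [AddCommMonoid P] [Module k P]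
variable (ρ₃ : A →ₐ[k] Module.End k P)

noncomputable def FL : (A ⊗[k] A) ⊗[k] A →ₗ[k] Module.End k ((M ⊗[k] N) ⊗[k] P) :=
  (TensorProduct.homTensorHomMap (RingHom.id k) (M ⊗[k] N) P (M ⊗[k] N) P) ∘ₗ
    (TensorProduct.map (F2 ρ₁ ρ₂) ρ₃.toLinearMap)

noncomputable def FR : A ⊗[k] (A ⊗[k] A) →ₗ[k] Module.End k (M ⊗[k] (N ⊗[k] P)) :=
  (TensorProduct.homTensorHomMap (RingHom.id k) M (N ⊗[k] P) M (N ⊗[k] P)) ∘ₗ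
    (TensorProduct.map ρ₁.toLinearMap (F2 ρ₂ ρ₃))

lemma FL_eq (u : A ⊗[k] A) :
    F2 (tensorAction ρ₁ ρ₂) ρ₃ u =
      FL ρ₁ ρ₂ ρ₃ ((Coalgebra.comul (R := k) (A := A)).rTensor A u) := by
  induction u using TensorProduct.induction_on with
  | zero => simp
  | tmul b b' =>
      rw [F2_tmul', tensorAction_eq]
      simp [FL, TensorProduct.homTensorHomMap_apply]
  | add u v hu hv => simp only [map_add, hu, hv]

lemma FR_eq (u : A ⊗[k] A) :
    F2 ρ₁ (tensorAction ρ₂ ρ₃) u =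
      FR ρ₁ ρ₂ ρ₃ ((Coalgebra.comul (R := k) (A := A)).lTensor A u) := by
  induction u using TensorProduct.induction_on with
  | zero => simp
  | tmul b b' =>
      rw [F2_tmul', tensorAction_eq]
      simp [FR, TensorProduct.homTensorHomMap_apply]
  | add u v hu hv => simp only [map_add, hu, hv]

lemma FL_FR (w : (A ⊗[k] A) ⊗[k] A) (z : (M ⊗[k] N) ⊗[k] P) :
    (TensorProduct.assoc k M N P) (FL ρ₁ ρ₂ ρ₃ w z) =
      FR ρ₁ ρ₂ ρ₃ ((TensorProduct.assoc k A A A) w) ((TensorProduct.assoc k M N P) z) := by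
  induction w using TensorProduct.induction_on with
  | zero => simp
  | tmul v b'' =>
      induction v using TensorProduct.induction_on with
      | zero => simp [FL, FR, TensorProduct.homTensorHomMap_apply]
      | tmul b b' =>
          simp only [FL, FR, LinearMap.comp_apply, TensorProduct.map_tmul,
            TensorProduct.assoc_tmul, TensorProduct.homTensorHomMap_apply, F2_tmul']
          induction z using TensorProduct.induction_on with
          | zero => simp
          | tmul zz p =>
              induction zz using TensorProduct.induction_on with
              | zero => simp
              | tmul x y => simp
              | add z1 z2 h1 h2 =>
                  simp only [TensorProduct.add_tmul, map_add, h1, h2]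
          | add z1 z2 h1 h2 => simp only [map_add, h1, h2]
      | add v1 v2 h1 h2 =>
          simp only [TensorProduct.add_tmul, map_add, LinearMap.add_apply, h1, h2]
  | add w1 w2 h1 h2 => simp only [map_add, LinearMap.add_apply, h1, h2]

lemma tensorAction_assoc (a : A) (z : (M ⊗[k] N) ⊗[k] P) :
    (TensorProduct.assoc k M N P) (tensorAction (tensorAction ρ₁ ρ₂) ρ₃ a z) =
      tensorAction ρ₁ (tensorAction ρ₂ ρ₃) a ((TensorProduct.assoc k M N P) z) := by
  rw [tensorAction_apply, tensorAction_apply, FL_eq, FR_eq, ← Coalgebra.coassoc_apply]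
  exact FL_FR ρ₁ ρ₂ ρ₃ _ z

end Assoc

section Hopf
variable {k A M : Type*} [Field k] [Ring A] [HopfAlgebra k A]
  [AddCommGroup M] [Module k M] [FiniteDimensional k M]
  (ρ : A →ₐ[k] Module.End k M) (ρD : A →ₐ[k] Module.End k (Module.Dual k M))

/-- The evaluation `M* ⊗ M → k` is invariant. -/
lemma contract_invariant
    (hρD : ∀ (a : A) (f : Module.Dual k M) (m : M),
      ρD a f m = f (ρ (HopfAlgebra.antipode (R := k) a) m))
    (b : A) (w : Module.Dual k M ⊗[k] M) :
    contractLeft k M (tensorAction ρD ρ b w) =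
      Coalgebra.counit (R := k) b • contractLeft k M w := by
  have key : ∀ (u : A ⊗[k] A) (w : Module.Dual k M ⊗[k] M),
      contractLeft k M (F2 ρD ρ u w) =
        contractLeft k M
          ((ρ ((LinearMap.mul' k A) ((HopfAlgebra.antipode (R := k)).rTensor A u))).lTensor
            (Module.Dual k M) w) := by
    intro u w
    induction u using TensorProduct.induction_on with
    | zero => simp
    | tmul c d =>
        induction w using TensorProduct.induction_on with
        | zero => simp
        | tmul f x =>
            simp only [F2_tmul, contractLeft_apply, LinearMap.rTensor_tmul,
              LinearMap.mul'_apply, map_mul, LinearMap.lTensor_tmul, hρD,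
              Module.End.mul_apply]
        | add w1 w2 h1 h2 => simp only [map_add, h1, h2]
    | add u v hu hv =>
        simp only [map_add, LinearMap.add_apply, map_add, LinearMap.lTensor_add,
          LinearMap.add_apply, hu, hv]
  rw [tensorAction_apply, key, HopfAlgebra.mul_antipode_rTensor_comul_apply]
  rw [AlgHom.commutes]
  induction w using TensorProduct.induction_on with
  | zero => simp
  | tmul f x => simp [Module.algebraMap_end_apply]
  | add w1 w2 h1 h2 => simp only [map_add, h1, h2, smul_add]

/-- The conjugation-type action on endomorphisms. -/
noncomputable def conjMap : A ⊗[k] A →ₗ[k] Module.End k M →ₗ[k] Module.End k M :=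
  TensorProduct.lift
    { toFun := fun b =>
        { toFun := fun b' =>
            { toFun := fun T => ρ b ∘ₗ T ∘ₗ ρ (HopfAlgebra.antipode (R := k) b')
              map_add' := fun T₁ T₂ => by
                simp only [LinearMap.comp_add, LinearMap.add_comp]
              map_smul' := fun c T => by
                simp only [LinearMap.comp_smul, LinearMap.smul_comp, RingHom.id_apply] }
          map_add' := fun b₁ b₂ => by
            ext T m; simp [LinearMap.comp_add, LinearMap.add_comp]
          map_smul' := fun c b' => by
            ext T m; simp }
      map_add' := fun b₁ b₂ => by ext b' T m; simp
      map_smul' := fun c b => by ext b' T m; simp }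

@[simp] lemma conjMap_tmul (b b' : A) (T : Module.End k M) :
    conjMap ρ (b ⊗ₜ[k] b') T = ρ b ∘ₗ T ∘ₗ ρ (HopfAlgebra.antipode (R := k) b') := rfl

/-- `χ : M ⊗ M* ≃ End M`. -/
noncomputable def chi : M ⊗[k] Module.Dual k M ≃ₗ[k] (M →ₗ[k] M) :=
  (TensorProduct.comm k M (Module.Dual k M)).trans (dualTensorHomEquiv k M M)

@[simp] lemma chi_tmul (x : M) (f : Module.Dual k M) (m : M) :
    chi (x ⊗ₜ[k] f) m = f m • x := by
  simp [chi, dualTensorHom_apply]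

lemma chi_F2 (hρD : ∀ (a : A) (f : Module.Dual k M) (m : M),
      ρD a f m = f (ρ (HopfAlgebra.antipode (R := k) a) m))
    (u : A ⊗[k] A) (t : M ⊗[k] Module.Dual k M) :
    chi (F2 ρ ρD u t) = conjMap ρ u (chi t) := by
  induction u using TensorProduct.induction_on with
  | zero => simp
  | tmul b b' =>
      induction t using TensorProduct.induction_on with
      | zero => simp
      | tmul x f =>
          ext m
          simp only [F2_tmul, chi_tmul, conjMap_tmul, LinearMap.comp_apply, hρD,
            map_smul, LinearMap.smul_apply]
      | add t1 t2 h1 h2 => simp only [map_add, h1, h2]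
  | add u v hu hv => simp only [map_add, LinearMap.add_apply, hu, hv]

lemma conjMap_one (u : A ⊗[k] A) :
    conjMap ρ u (1 : Module.End k M) =
      ρ ((LinearMap.mul' k A) ((HopfAlgebra.antipode (R := k)).lTensor A u)) := by
  induction u using TensorProduct.induction_on with
  | zero => simp
  | tmul b b' =>
      simp only [conjMap_tmul, LinearMap.lTensor_tmul, LinearMap.mul'_apply, map_mul]
      rfl
  | add u v hu hv => simp only [map_add, LinearMap.add_apply, hu, hv]

lemma chi_coev : chi (coevaluation k M 1) = (1 : Module.End k M) := by
  rw [coevaluation_apply_one]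
  ext m
  simp only [map_sum, LinearMap.sum_apply, chi_tmul, Module.Basis.coord_apply, Module.End.one_apply]
  exact Module.Basis.sum_repr (Module.Basis.ofVectorSpace k M) m

/-- The coevaluation element is invariant. -/
lemma coev_invariant
    (hρD : ∀ (a : A) (f : Module.Dual k M) (m : M),
      ρD a f m = f (ρ (HopfAlgebra.antipode (R := k) a) m))
    (b : A) :
    tensorAction ρ ρD b (coevaluation k M 1) =
      Coalgebra.counit (R := k) b • coevaluation k M 1 := by
  apply chi.injective
  rw [tensorAction_apply, chi_F2 ρ ρD hρD, chi_coev, conjMap_one,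
    HopfAlgebra.mul_antipode_lTensor_comul_apply, map_smul, chi_coev, AlgHom.commutes]
  ext m
  simp [Module.algebraMap_end_apply]

end Hopf

section Theta
variable {k A : Type*} [Field k] [Ring A] [HopfAlgebra k A]
variable {V W : Type*} [AddCommGroup V] [Module k V] [AddCommGroup W] [Module k W]

lemma antipode_one' : HopfAlgebra.antipode (R := k) (1 : A) = 1 := by
  have h := HopfAlgebra.mul_antipode_rTensor_comul_apply (R := k) (a := (1 : A))
  rw [Bialgebra.comul_one, Algebra.TensorProduct.one_def] at h
  simpa using h

variable (k A V) in
/-- The "multiplication on the left factor" action on `A ⊗ V`. -/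
noncomputable def rhoFree : A →ₐ[k] Module.End k (A ⊗[k] V) :=
  AlgHom.ofLinearMap
    ((LinearMap.rTensorHom (R := k) (N := A) (P := A) V).comp
      (Algebra.lmul k A).toLinearMap)
    (by ext b v; simp)
    (fun x y => by ext b v; simp [mul_assoc])

@[simp] lemma rhoFree_tmul (a b : A) (v : V) :
    rhoFree k A V a (b ⊗ₜ[k] v) = (a * b) ⊗ₜ[k] v := rfl

variable (σ : A →ₐ[k] Module.End k W)

/-- `b ⊗ w ↦ σ b w`. -/
noncomputable def actMap : A ⊗[k] W →ₗ[k] W := TensorProduct.lift σ.toLinearMap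

@[simp] lemma actMap_tmul (b : A) (w : W) : actMap σ (b ⊗ₜ[k] w) = σ b w := rfl

/-- `(Σ c ⊗ d) ⊗ (v ⊗ w) ↦ Σ (c ⊗ v) ⊗ (σ d w)`. -/
noncomputable def thetaAux' : (A ⊗[k] A) ⊗[k] (V ⊗[k] W) →ₗ[k] (A ⊗[k] V) ⊗[k] W :=
  (LinearMap.lTensor (A ⊗[k] V) (actMap σ)) ∘ₗ
    (TensorProduct.tensorTensorTensorComm k A A V W).toLinearMap

@[simp] lemma thetaAux'_tmul (c d : A) (v : V) (w : W) :
    thetaAux' σ ((c ⊗ₜ[k] d) ⊗ₜ[k] (v ⊗ₜ[k] w)) = (c ⊗ₜ[k] v) ⊗ₜ[k] σ d w := by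
  simp [thetaAux']

/-- `(Σ c ⊗ d) ⊗ (v ⊗ w) ↦ Σ c ⊗ (v ⊗ σ d w)`. -/
noncomputable def thetaAux2 : (A ⊗[k] A) ⊗[k] (V ⊗[k] W) →ₗ[k] A ⊗[k] (V ⊗[k] W) :=
  (TensorProduct.assoc k A V W).toLinearMap ∘ₗ
    (LinearMap.lTensor (A ⊗[k] V) (actMap σ)) ∘ₗ
    (TensorProduct.tensorTensorTensorComm k A A V W).toLinearMap

@[simp] lemma thetaAux2_tmul (c d : A) (v : V) (w : W) :
    thetaAux2 σ ((c ⊗ₜ[k] d) ⊗ₜ[k] (v ⊗ₜ[k] w)) = c ⊗ₜ[k] (v ⊗ₜ[k] σ d w) := by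
  simp [thetaAux2]

/-- `(Σ c ⊗ d) ⊗ (v ⊗ w) ↦ Σ c ⊗ (v ⊗ σ (S d) w)`. -/
noncomputable def thetaAux : (A ⊗[k] A) ⊗[k] (V ⊗[k] W) →ₗ[k] A ⊗[k] (V ⊗[k] W) :=
  (TensorProduct.assoc k A V W).toLinearMap ∘ₗ
    (LinearMap.lTensor (A ⊗[k] V)
      ((actMap σ) ∘ₗ (HopfAlgebra.antipode (R := k) (A := A)).rTensor W)) ∘ₗ
    (TensorProduct.tensorTensorTensorComm k A A V W).toLinearMap

@[simp] lemma thetaAux_tmul (c d : A) (v : V) (w : W) :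
    thetaAux σ ((c ⊗ₜ[k] d) ⊗ₜ[k] (v ⊗ₜ[k] w)) =
      c ⊗ₜ[k] (v ⊗ₜ[k] σ (HopfAlgebra.antipode (R := k) d) w) := by
  simp [thetaAux]

/-- The untwisting map `(A ⊗ V) ⊗ W → A ⊗ (V ⊗ W)`, `(b ⊗ v) ⊗ w ↦ Σ b₁ ⊗ (v ⊗ S(b₂) w)`. -/
noncomputable def theta : (A ⊗[k] V) ⊗[k] W →ₗ[k] A ⊗[k] (V ⊗[k] W) :=
  (thetaAux σ) ∘ₗ ((Coalgebra.comul (R := k) (A := A)).rTensor (V ⊗[k] W)) ∘ₗ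
    (TensorProduct.assoc k A V W).toLinearMap

lemma theta_tmul (b : A) (v : V) (w : W) :
    theta σ ((b ⊗ₜ[k] v) ⊗ₜ[k] w) =
      thetaAux σ ((Coalgebra.comul (R := k) b) ⊗ₜ[k] (v ⊗ₜ[k] w)) := by
  simp [theta]

/-- The inverse untwisting map `A ⊗ (V ⊗ W) → (A ⊗ V) ⊗ W`,
`b ⊗ (v ⊗ w) ↦ Σ (b₁ ⊗ v) ⊗ b₂ w`. -/
noncomputable def theta' : A ⊗[k] (V ⊗[k] W) →ₗ[k] (A ⊗[k] V) ⊗[k] W :=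
  (thetaAux' σ) ∘ₗ ((Coalgebra.comul (R := k) (A := A)).rTensor (V ⊗[k] W))

lemma theta'_tmul (b : A) (z : V ⊗[k] W) :
    theta' σ (b ⊗ₜ[k] z) = thetaAux' σ ((Coalgebra.comul (R := k) b) ⊗ₜ[k] z) := by
  simp [theta']

/-- `J u = Σ u₁₁ ⊗ (u₁₂ * S u₂)` for `u = Σ u₁ ⊗ u₂`. -/
noncomputable def Jmap : A ⊗[k] A →ₗ[k] A ⊗[k] A :=
  (LinearMap.lTensor A ((LinearMap.mul' k A) ∘ₗ
      (HopfAlgebra.antipode (R := k) (A := A)).lTensor A)) ∘ₗ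
    (TensorProduct.assoc k A A A).toLinearMap ∘ₗ
    (Coalgebra.comul (R := k) (A := A)).rTensor A

/-- `J' u = Σ u₁₁ ⊗ (S u₁₂ * u₂)`. -/
noncomputable def Jmap' : A ⊗[k] A →ₗ[k] A ⊗[k] A :=
  (LinearMap.lTensor A ((LinearMap.mul' k A) ∘ₗ
      (HopfAlgebra.antipode (R := k) (A := A)).rTensor A)) ∘ₗ
    (TensorProduct.assoc k A A A).toLinearMap ∘ₗ
    (Coalgebra.comul (R := k) (A := A)).rTensor A

lemma Jmap_comul (b : A) : Jmap (k := k) (A := A) (Coalgebra.comul b) = b ⊗ₜ[k] 1 := by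
  have h1 : Jmap (k := k) (A := A) (Coalgebra.comul b) =
      (LinearMap.lTensor A ((LinearMap.mul' k A) ∘ₗ
        (HopfAlgebra.antipode (R := k) (A := A)).lTensor A))
        ((Coalgebra.comul (R := k) (A := A)).lTensor A (Coalgebra.comul b)) := by
    rw [Jmap]; simp only [LinearMap.comp_apply]
    congr 1
    exact Coalgebra.coassoc_apply b
  rw [h1, ← LinearMap.comp_apply, ← LinearMap.lTensor_comp]
  have h2 : ((LinearMap.mul' k A) ∘ₗ
        (HopfAlgebra.antipode (R := k) (A := A)).lTensor A) ∘ₗ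
        (Coalgebra.comul (R := k) (A := A)) =
      (Algebra.linearMap k A) ∘ₗ (Coalgebra.counit (R := k) (A := A)) := by
    rw [LinearMap.comp_assoc]; exact HopfAlgebra.mul_antipode_lTensor_comul
  rw [h2, LinearMap.lTensor_comp, LinearMap.comp_apply, Coalgebra.lTensor_counit_comul]
  simp

lemma Jmap'_comul (b : A) : Jmap' (k := k) (A := A) (Coalgebra.comul b) = b ⊗ₜ[k] 1 := by
  have h1 : Jmap' (k := k) (A := A) (Coalgebra.comul b) =
      (LinearMap.lTensor A ((LinearMap.mul' k A) ∘ₗ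
        (HopfAlgebra.antipode (R := k) (A := A)).rTensor A))
        ((Coalgebra.comul (R := k) (A := A)).lTensor A (Coalgebra.comul b)) := by
    rw [Jmap']; simp only [LinearMap.comp_apply]
    congr 1
    exact Coalgebra.coassoc_apply b
  rw [h1, ← LinearMap.comp_apply, ← LinearMap.lTensor_comp]
  have h2 : ((LinearMap.mul' k A) ∘ₗ
        (HopfAlgebra.antipode (R := k) (A := A)).rTensor A) ∘ₗ
        (Coalgebra.comul (R := k) (A := A)) =
      (Algebra.linearMap k A) ∘ₗ (Coalgebra.counit (R := k) (A := A)) := by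
    rw [LinearMap.comp_assoc]; exact HopfAlgebra.mul_antipode_rTensor_comul
  rw [h2, LinearMap.lTensor_comp, LinearMap.comp_apply, Coalgebra.lTensor_counit_comul]
  simp

lemma theta'_thetaAux (u : A ⊗[k] A) (v : V) (w : W) :
    theta' σ (thetaAux σ (u ⊗ₜ[k] (v ⊗ₜ[k] w))) =
      thetaAux' σ ((Jmap (k := k) (A := A) u) ⊗ₜ[k] (v ⊗ₜ[k] w)) := by
  induction u using TensorProduct.induction_on with
  | zero => simp
  | tmul c d =>
      rw [thetaAux_tmul, theta'_tmul]
      have hJ : Jmap (k := k) (A := A) (c ⊗ₜ[k] d) =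
          (LinearMap.lTensor A ((LinearMap.mul' k A) ∘ₗ
            (HopfAlgebra.antipode (R := k) (A := A)).lTensor A))
            ((TensorProduct.assoc k A A A) ((Coalgebra.comul (R := k) c) ⊗ₜ[k] d)) := by
        simp [Jmap]
      rw [hJ]
      generalize Coalgebra.comul (R := k) c = U
      induction U using TensorProduct.induction_on with
      | zero => simp
      | tmul c₁ c₂ =>
          simp only [TensorProduct.assoc_tmul, LinearMap.lTensor_tmul,
            LinearMap.comp_apply, LinearMap.mul'_apply, thetaAux'_tmul, map_mul,
            Module.End.mul_apply]
      | add U₁ U₂ h1 h2 =>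
          simp only [TensorProduct.add_tmul, map_add, LinearMap.add_apply, h1, h2]
  | add u₁ u₂ h1 h2 =>
      simp only [TensorProduct.add_tmul, map_add, LinearMap.add_apply, h1, h2]

lemma theta'_theta (z : (A ⊗[k] V) ⊗[k] W) : theta' σ (theta σ z) = z := by
  induction z using TensorProduct.induction_on with
  | zero => simp
  | tmul q w =>
      induction q using TensorProduct.induction_on with
      | zero => simp
      | tmul b v =>
          rw [theta_tmul, theta'_thetaAux, Jmap_comul, thetaAux'_tmul, map_one]
          rfl
      | add q₁ q₂ h1 h2 =>
          simp only [TensorProduct.add_tmul, map_add, h1, h2]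
  | add z₁ z₂ h1 h2 => simp only [map_add, h1, h2]

lemma theta_thetaAux' (u : A ⊗[k] A) (v : V) (w : W) :
    theta σ (thetaAux' σ (u ⊗ₜ[k] (v ⊗ₜ[k] w))) =
      thetaAux2 σ ((Jmap' (k := k) (A := A) u) ⊗ₜ[k] (v ⊗ₜ[k] w)) := by
  induction u using TensorProduct.induction_on with
  | zero => simp
  | tmul c d =>
      rw [thetaAux'_tmul, theta_tmul]
      have hJ : Jmap' (k := k) (A := A) (c ⊗ₜ[k] d) =
          (LinearMap.lTensor A ((LinearMap.mul' k A) ∘ₗ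
            (HopfAlgebra.antipode (R := k) (A := A)).rTensor A))
            ((TensorProduct.assoc k A A A) ((Coalgebra.comul (R := k) c) ⊗ₜ[k] d)) := by
        simp [Jmap']
      rw [hJ]
      generalize Coalgebra.comul (R := k) c = U
      induction U using TensorProduct.induction_on with
      | zero => simp
      | tmul c₁ c₂ =>
          simp only [TensorProduct.assoc_tmul, LinearMap.lTensor_tmul,
            LinearMap.comp_apply, LinearMap.mul'_apply, thetaAux_tmul, thetaAux2_tmul,
            LinearMap.rTensor_tmul, map_mul, Module.End.mul_apply]
      | add U₁ U₂ h1 h2 =>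
          simp only [TensorProduct.add_tmul, map_add, LinearMap.add_apply, h1, h2]
  | add u₁ u₂ h1 h2 =>
      simp only [TensorProduct.add_tmul, map_add, LinearMap.add_apply, h1, h2]

lemma theta_theta' (z : A ⊗[k] (V ⊗[k] W)) : theta σ (theta' σ z) = z := by
  induction z using TensorProduct.induction_on with
  | zero => simp
  | tmul b y =>
      induction y using TensorProduct.induction_on with
      | zero => simp
      | tmul v w =>
          rw [theta'_tmul, theta_thetaAux', Jmap'_comul, thetaAux2_tmul, map_one]
          rfl
      | add y₁ y₂ h1 h2 =>
          simp only [TensorProduct.tmul_add, map_add, h1, h2]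
  | add z₁ z₂ h1 h2 => simp only [map_add, h1, h2]

lemma F2_thetaAux'_mul (u u' : A ⊗[k] A) (z : V ⊗[k] W) :
    F2 (rhoFree k A V) σ u (thetaAux' σ (u' ⊗ₜ[k] z)) =
      thetaAux' σ ((u * u') ⊗ₜ[k] z) := by
  induction u using TensorProduct.induction_on with
  | zero => simp
  | tmul c d =>
      induction u' using TensorProduct.induction_on with
      | zero => simp
      | tmul c' d' =>
          induction z using TensorProduct.induction_on with
          | zero => simp
          | tmul v w =>
              simp only [thetaAux'_tmul, F2_tmul, rhoFree_tmul,
                Algebra.TensorProduct.tmul_mul_tmul, map_mul, Module.End.mul_apply]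
          | add z₁ z₂ h1 h2 =>
              simp only [TensorProduct.tmul_add, map_add, h1, h2]
      | add u₁ u₂ h1 h2 =>
          simp only [TensorProduct.add_tmul, map_add, mul_add, h1, h2]
  | add u₁ u₂ h1 h2 =>
      simp only [map_add, LinearMap.add_apply, add_mul, TensorProduct.add_tmul, h1, h2]

/-- `theta'` intertwines the `A`-action on the left factor with the mixed action. -/
lemma theta'_Alinear (a : A) (q : A ⊗[k] (V ⊗[k] W)) :
    theta' σ ((LinearMap.mulLeft k a).rTensor (V ⊗[k] W) q) =
      tensorAction (rhoFree k A V) σ a (theta' σ q) := by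
  induction q using TensorProduct.induction_on with
  | zero => simp
  | tmul b z =>
      rw [LinearMap.rTensor_tmul, LinearMap.mulLeft_apply, theta'_tmul, theta'_tmul,
        tensorAction_apply, F2_thetaAux'_mul, ← Bialgebra.comul_mul]
  | add q₁ q₂ h1 h2 => simp only [map_add, h1, h2]

/-- `theta` intertwines the mixed action with the `A`-action on the left factor. -/
lemma theta_Alinear (a : A) (z : (A ⊗[k] V) ⊗[k] W) :
    theta σ (tensorAction (rhoFree k A V) σ a z) =
      (LinearMap.mulLeft k a).rTensor (V ⊗[k] W) (theta σ z) := by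
  conv_lhs => rw [show z = theta' σ (theta σ z) from (theta'_theta σ z).symm]
  rw [← theta'_Alinear, theta_theta']

end Theta

end Aux


/-- let `A` be a finite dimensional Hopf algebra over a field
`k` and `M` a finite dimensional `A`-module (the `A`-action encoded by the
`k`-algebra map `ρ : A → End_k M`; the dual module `M* = Hom_k(M,k)` carries
the `A`-action `(a • f)(m) = f(S(a) m)` given by the antipode `S`, encoded by
`ρD`).  If `M ⊗ M` is projective and `M ⊗ M* ≅ M* ⊗ M` as `A`-modules, then
`M` is projective. -/
theorem stmt_19 (k A M : Type*) [Field k] [Ring A] [HopfAlgebra k A]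
    [FiniteDimensional k A]
    [AddCommGroup M] [Module k M] [FiniteDimensional k M]
    (ρ : A →ₐ[k] Module.End k M)
    (ρD : A →ₐ[k] Module.End k (Module.Dual k M))
    (hρD : ∀ (a : A) (f : Module.Dual k M) (m : M),
      ρD a f m = f (ρ (HopfAlgebra.antipode (R := k) a) m))
    (e : (M ⊗[k] Module.Dual k M) ≃ₗ[k] (Module.Dual k M ⊗[k] M))
    (he : ∀ (a : A) (x : M ⊗[k] Module.Dual k M),
      e (tensorAction ρ ρD a x) = tensorAction ρD ρ a (e x))
    (hproj : letI : Module A (M ⊗[k] M) :=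
        Module.compHom (M ⊗[k] M) (tensorAction ρ ρ).toRingHom
      Module.Projective A (M ⊗[k] M)) :
    letI : Module A M := Module.compHom M ρ.toRingHom
    Module.Projective A M := by
  classical
  letI instM : Module A M := Module.compHom M ρ.toRingHom
  letI instX : Module A (M ⊗[k] M) :=
    Module.compHom (M ⊗[k] M) (tensorAction ρ ρ).toRingHom
  haveI hPX : Module.Projective A (M ⊗[k] M) := hproj
  -- basic smul facts
  have smulM : ∀ (a : A) (m : M), a • m = ρ a m := fun a m => rfl
  have smulX : ∀ (a : A) (z : M ⊗[k] M), a • z = tensorAction ρ ρ a z :=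
    fun a z => rfl
  haveI : IsScalarTower k A (M ⊗[k] M) := by
    constructor
    intro c a z
    rw [smulX, smulX, map_smul, LinearMap.smul_apply]
  have hAX : ∀ (a : A) (v : A ⊗[k] (M ⊗[k] M)),
      a • v = rhoFree k A (M ⊗[k] M) a v := by
    intro a v
    induction v using TensorProduct.induction_on with
    | zero => simp
    | tmul b y => rw [TensorProduct.smul_tmul', rhoFree_tmul, smul_eq_mul]
    | add v₁ v₂ h1 h2 => rw [smul_add, map_add, h1, h2]
  have hQsmul : ∀ (a : A) (q : A ⊗[k] ((M ⊗[k] M) ⊗[k] Module.Dual k M)),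
      a • q = (LinearMap.mulLeft k a).rTensor _ q := by
    intro a q
    induction q using TensorProduct.induction_on with
    | zero => simp
    | tmul b y =>
        rw [TensorProduct.smul_tmul', LinearMap.rTensor_tmul, LinearMap.mulLeft_apply,
          smul_eq_mul]
    | add q₁ q₂ h1 h2 => rw [smul_add, map_add, h1, h2]
  -- the splitting of the action map on M ⊗ M
  let π₂k : A ⊗[k] (M ⊗[k] M) →ₗ[k] M ⊗[k] M :=
    TensorProduct.lift (tensorAction ρ ρ).toLinearMap
  have hπ₂k : ∀ (a : A) (v : A ⊗[k] (M ⊗[k] M)), π₂k (a • v) = a • π₂k v := by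
    intro a v
    induction v using TensorProduct.induction_on with
    | zero => simp
    | tmul b z =>
        rw [TensorProduct.smul_tmul', smul_eq_mul]
        show π₂k ((a * b) ⊗ₜ[k] z) = a • π₂k (b ⊗ₜ[k] z)
        simp only [π₂k, TensorProduct.lift.tmul, AlgHom.toLinearMap_apply, map_mul,
          Module.End.mul_apply, smulX]
    | add v₁ v₂ h1 h2 => rw [smul_add, map_add, map_add, h1, h2, smul_add]
  let π₂ : A ⊗[k] (M ⊗[k] M) →ₗ[A] M ⊗[k] M :=
    { toFun := π₂k
      map_add' := π₂k.map_add
      map_smul' := fun a v => by simpa using hπ₂k a v }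
  have hπ₂surj : Function.Surjective π₂ := by
    intro z
    refine ⟨1 ⊗ₜ z, ?_⟩
    show π₂k (1 ⊗ₜ[k] z) = z
    simp [π₂k]
  obtain ⟨s₂, hs₂⟩ := Module.projective_lifting_property π₂ LinearMap.id hπ₂surj
  have hs₂' : ∀ z : M ⊗[k] M, π₂ (s₂ z) = z := fun z => by
    simpa using LinearMap.congr_fun hs₂ z
  have hs₂A : ∀ (a : A) (z : M ⊗[k] M),
      (s₂.restrictScalars k) (tensorAction ρ ρ a z) =
        rhoFree k A (M ⊗[k] M) a ((s₂.restrictScalars k) z) := by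
    intro a z
    rw [← smulX, LinearMap.restrictScalars_apply, LinearMap.restrictScalars_apply,
      map_smul, hAX]
  have hπ₂A : ∀ (a : A) (v : A ⊗[k] (M ⊗[k] M)),
      (π₂.restrictScalars k) (rhoFree k A (M ⊗[k] M) a v) =
        tensorAction ρ ρ a ((π₂.restrictScalars k) v) := by
    intro a v
    rw [← hAX, LinearMap.restrictScalars_apply, LinearMap.restrictScalars_apply,
      map_smul, smulX]
  -- the k-linear maps of the chain
  let c₀ : M ⊗[k] Module.Dual k M := coevaluation k M 1
  let L1 : M →ₗ[k] (M ⊗[k] Module.Dual k M) ⊗[k] M :=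
    TensorProduct.mk k (M ⊗[k] Module.Dual k M) M c₀
  let L2 := (TensorProduct.assoc k M (Module.Dual k M) M).toLinearMap
  let L3 := TensorProduct.map (LinearMap.id (R := k) (M := M)) e.symm.toLinearMap
  let L4 := (TensorProduct.assoc k M M (Module.Dual k M)).symm.toLinearMap
  let L5 := TensorProduct.map (s₂.restrictScalars k)
    (LinearMap.id (R := k) (M := Module.Dual k M))
  let L6 := theta (V := M ⊗[k] M) ρD
  let ik := L6 ∘ₗ L5 ∘ₗ L4 ∘ₗ L3 ∘ₗ L2 ∘ₗ L1
  let G := (TensorProduct.rid k M).toLinearMap ∘ₗ (contractLeft k M).lTensor M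
  let P5 := theta' (V := M ⊗[k] M) ρD
  let P4 := TensorProduct.map (π₂.restrictScalars k)
    (LinearMap.id (R := k) (M := Module.Dual k M))
  let P3 := (TensorProduct.assoc k M M (Module.Dual k M)).toLinearMap
  let P2 := TensorProduct.map (LinearMap.id (R := k) (M := M)) e.toLinearMap
  let pk := G ∘ₗ P2 ∘ₗ P3 ∘ₗ P4 ∘ₗ P5
  -- the composition is the identity
  have hcomp : ∀ m : M, pk (ik m) = m := by
    intro m
    have h54 : P4 ∘ₗ L5 = LinearMap.id := by
      rw [show P4 ∘ₗ L5 = TensorProduct.map ((π₂.restrictScalars k) ∘ₗ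
          (s₂.restrictScalars k)) ((LinearMap.id (R := k) (M := Module.Dual k M)) ∘ₗ
          LinearMap.id) from (TensorProduct.map_comp _ _ _ _).symm]
      have : (π₂.restrictScalars k) ∘ₗ (s₂.restrictScalars k) =
          LinearMap.id (R := k) (M := M ⊗[k] M) :=
        LinearMap.ext fun z => hs₂' z
      rw [this, LinearMap.id_comp, TensorProduct.map_id]
    have h32 : P2 ∘ₗ L3 = LinearMap.id := by
      rw [show P2 ∘ₗ L3 = TensorProduct.map ((LinearMap.id (R := k) (M := M)) ∘ₗ
          LinearMap.id) (e.toLinearMap ∘ₗ e.symm.toLinearMap) from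
          (TensorProduct.map_comp _ _ _ _).symm]
      have : e.toLinearMap ∘ₗ e.symm.toLinearMap =
          LinearMap.id (R := k) (M := Module.Dual k M ⊗[k] M) := by
        ext z; simp
      rw [this, LinearMap.id_comp, TensorProduct.map_id]
    have hsnake : G (L2 (L1 m)) = m := by
      have h := LinearMap.congr_fun (contractLeft_assoc_coevaluation' k M)
        ((1 : k) ⊗ₜ[k] m)
      simp only [LinearMap.comp_apply, LinearEquiv.coe_toLinearMap,
        LinearMap.rTensor_tmul, TensorProduct.lid_tmul, one_smul,
        TensorProduct.rid_symm_apply] at h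
      simp only [G, L2, L1, LinearMap.comp_apply, TensorProduct.mk_apply,
        LinearEquiv.coe_toLinearMap, c₀]
      rw [h]
      simp
    simp only [pk, ik, LinearMap.comp_apply]
    rw [show P5 (L6 (L5 (L4 (L3 (L2 (L1 m)))))) = L5 (L4 (L3 (L2 (L1 m)))) from
      theta'_theta ρD _]
    rw [show P4 (L5 (L4 (L3 (L2 (L1 m))))) = L4 (L3 (L2 (L1 m))) from by
      have := LinearMap.congr_fun h54 (L4 (L3 (L2 (L1 m))))
      simpa using this]
    rw [show P3 (L4 (L3 (L2 (L1 m)))) = L3 (L2 (L1 m)) from by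
      simp only [P3, L4, LinearEquiv.coe_toLinearMap, LinearEquiv.apply_symm_apply]]
    rw [show P2 (L3 (L2 (L1 m))) = L2 (L1 m) from by
      have := LinearMap.congr_fun h32 (L2 (L1 m))
      simpa using this]
    exact hsnake
  -- A-linearity of ik
  have hesymm : ∀ (a : A) (y : Module.Dual k M ⊗[k] M),
      e.symm (tensorAction ρD ρ a y) = tensorAction ρ ρD a (e.symm y) := by
    intro a y
    apply e.injective
    rw [LinearEquiv.apply_symm_apply, he, LinearEquiv.apply_symm_apply]
  have habc : ∀ (a : A) (y : M ⊗[k] (M ⊗[k] Module.Dual k M)),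
      (TensorProduct.assoc k M M (Module.Dual k M)).symm
          (tensorAction ρ (tensorAction ρ ρD) a y) =
        tensorAction (tensorAction ρ ρ) ρD a
          ((TensorProduct.assoc k M M (Module.Dual k M)).symm y) := by
    intro a y
    apply (TensorProduct.assoc k M M (Module.Dual k M)).injective
    rw [LinearEquiv.apply_symm_apply, tensorAction_assoc, LinearEquiv.apply_symm_apply]
  have hik : ∀ (a : A) (m : M), ik (ρ a m) = a • ik m := by
    intro a m
    simp only [ik, LinearMap.comp_apply]
    have h1 : L1 (ρ a m) = tensorAction (tensorAction ρ ρD) ρ a (L1 m) := by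
      simp only [L1, TensorProduct.mk_apply]
      exact (tensorAction_invariant_left (tensorAction ρ ρD) ρ c₀
        (coev_invariant ρ ρD hρD) a m).symm
    rw [h1]
    have h2 : L2 (tensorAction (tensorAction ρ ρD) ρ a (L1 m)) =
        tensorAction ρ (tensorAction ρD ρ) a (L2 (L1 m)) :=
      tensorAction_assoc ρ ρD ρ a (L1 m)
    rw [h2]
    have h3 : L3 (tensorAction ρ (tensorAction ρD ρ) a (L2 (L1 m))) =
        tensorAction ρ (tensorAction ρ ρD) a (L3 (L2 (L1 m))) :=
      tensorAction_map_compat ρ (tensorAction ρD ρ) ρ (tensorAction ρ ρD)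
        LinearMap.id e.symm.toLinearMap (fun _ _ => rfl) hesymm a (L2 (L1 m))
    rw [h3]
    rw [show L4 (tensorAction ρ (tensorAction ρ ρD) a (L3 (L2 (L1 m)))) =
        tensorAction (tensorAction ρ ρ) ρD a (L4 (L3 (L2 (L1 m)))) from
      habc a _]
    rw [show L5 (tensorAction (tensorAction ρ ρ) ρD a (L4 (L3 (L2 (L1 m))))) =
        tensorAction (rhoFree k A (M ⊗[k] M)) ρD a (L5 (L4 (L3 (L2 (L1 m))))) from
      tensorAction_map_compat (tensorAction ρ ρ) ρD (rhoFree k A (M ⊗[k] M)) ρD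
        (s₂.restrictScalars k) LinearMap.id hs₂A (fun _ _ => rfl) a _]
    rw [show L6 (tensorAction (rhoFree k A (M ⊗[k] M)) ρD a
          (L5 (L4 (L3 (L2 (L1 m)))))) =
        (LinearMap.mulLeft k a).rTensor _ (L6 (L5 (L4 (L3 (L2 (L1 m)))))) from
      theta_Alinear ρD a _]
    rw [← hQsmul]
  -- A-linearity of pk
  have hct : ∀ (b : A) (w : Module.Dual k M ⊗[k] M),
      contractLeft k M (tensorAction ρD ρ b w) =
        Coalgebra.counit (R := k) b • contractLeft k M w :=
    contract_invariant ρ ρD hρD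
  have hpk : ∀ (a : A) (q : A ⊗[k] ((M ⊗[k] M) ⊗[k] Module.Dual k M)),
      pk (a • q) = ρ a (pk q) := by
    intro a q
    simp only [pk, LinearMap.comp_apply]
    rw [hQsmul]
    rw [show P5 ((LinearMap.mulLeft k a).rTensor _ q) =
        tensorAction (rhoFree k A (M ⊗[k] M)) ρD a (P5 q) from theta'_Alinear ρD a q]
    rw [show P4 (tensorAction (rhoFree k A (M ⊗[k] M)) ρD a (P5 q)) =
        tensorAction (tensorAction ρ ρ) ρD a (P4 (P5 q)) from
      tensorAction_map_compat (rhoFree k A (M ⊗[k] M)) ρD (tensorAction ρ ρ) ρD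
        (π₂.restrictScalars k) LinearMap.id hπ₂A (fun _ _ => rfl) a _]
    rw [show P3 (tensorAction (tensorAction ρ ρ) ρD a (P4 (P5 q))) =
        tensorAction ρ (tensorAction ρ ρD) a (P3 (P4 (P5 q))) from
      tensorAction_assoc ρ ρ ρD a _]
    rw [show P2 (tensorAction ρ (tensorAction ρ ρD) a (P3 (P4 (P5 q)))) =
        tensorAction ρ (tensorAction ρD ρ) a (P2 (P3 (P4 (P5 q)))) from
      tensorAction_map_compat ρ (tensorAction ρ ρD) ρ (tensorAction ρD ρ)
        LinearMap.id e.toLinearMap (fun _ _ => rfl) he a _]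
    exact tensorAction_invariant_right ρ (tensorAction ρD ρ) (contractLeft k M)
      hct a _
  -- assemble
  let iA : M →ₗ[A] A ⊗[k] ((M ⊗[k] M) ⊗[k] Module.Dual k M) :=
    { toFun := ik
      map_add' := ik.map_add
      map_smul' := fun a m => by
        simp only [RingHom.id_apply]
        rw [smulM, hik] }
  let pA : A ⊗[k] ((M ⊗[k] M) ⊗[k] Module.Dual k M) →ₗ[A] M :=
    { toFun := pk
      map_add' := pk.map_add
      map_smul' := fun a q => by
        simp only [RingHom.id_apply]
        rw [smulM, hpk] }
  haveI : Module.Free A (A ⊗[k] ((M ⊗[k] M) ⊗[k] Module.Dual k M)) :=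
    Module.Free.of_basis
      ((Module.Basis.ofVectorSpace k ((M ⊗[k] M) ⊗[k] Module.Dual k M)).baseChange A)
  exact Module.Projective.of_split iA pA (by ext m; exact hcomp m)
end
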